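/- Let μ, ν, β, p be real numbers with μ > −1, ν > μ − 1, β > 0 and p > 0. Let G : (0,∞) → ℝ be measurable with Laplace transform F(x) = ∫₀^∞ e^{−x t} G(t) dt converging absolutely for every x ≥ p, and assume the function (y,t) ↦ y^μ ₁F₁(ν+1; μ+1; −β y) e^{−(y+p) t} G(t) is integrable on (0,∞) × (0,∞). Then ∫₀^∞ y^μ F(y+p) ₁F₁(ν+1; μ+1; −β y) dy = Γ(μ+1) ∫₀^∞ G(t) t^{ν−μ} e^{−p t} / (t+β)^{ν+1} dt. -/

import Mathlib

open MeasureTheory Set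

/-- Pochhammer symbol `(c)_n = c(c+1)⋯(c+n−1)` for a real `c`. -/
noncomputable def poch (c : ℝ) (n : ℕ) : ℝ := ∏ i ∈ Finset.range n, (c + i)

/-- The confluent hypergeometric series `₁F₁(a;b;z)`. -/
noncomputable def hyp1F1 (a b z : ℝ) : ℝ :=
  ∑' n : ℕ, poch a n / poch b n * z ^ n / n.factorial

lemma poch_zero (c : ℝ) : poch c 0 = 1 := by simp [poch]

lemma poch_one (c : ℝ) : poch c 1 = c := by simp [poch]

lemma poch_succ (c : ℝ) (n : ℕ) : poch c (n+1) = poch c n * (c + n) := by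
  simp [poch, Finset.prod_range_succ]

lemma poch_pos {b : ℝ} (hb : 0 < b) (n : ℕ) : 0 < poch b n :=
  Finset.prod_pos (fun i _ => by positivity)

lemma poch_add (b : ℝ) (k m : ℕ) : poch b (k + m) = poch b k * poch (b + k) m := by
  induction m with
  | zero => simp [poch]
  | succ m ih =>
      rw [← Nat.add_assoc, poch_succ, ih, poch_succ]
      push_cast; ring

lemma poch_succ' (c : ℝ) (n : ℕ) : poch c (n+1) = c * poch (c+1) n := by
  have := poch_add c 1 n
  rw [Nat.add_comm 1 n] at this
  simpa [poch_one] using this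

lemma summable_abs_of_ratio {f : ℕ → ℝ} {r : ℕ → ℝ}
    (hrec : ∀ n, |f (n+1)| = |f n| * r n)
    (hr : Filter.Tendsto r Filter.atTop (nhds 0)) :
    Summable (fun n => |f n|) := by
  apply summable_of_ratio_norm_eventually_le (r := (1/2 : ℝ)) (by norm_num)
  have hev : ∀ᶠ n in Filter.atTop, r n ≤ 1/2 := by
    have := hr.eventually_le_const (by norm_num : (0:ℝ) < 1/2)
    simpa using this
  filter_upwards [hev] with n hn
  rw [Real.norm_eq_abs, Real.norm_eq_abs, abs_abs, abs_abs, hrec n]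
  calc |f n| * r n ≤ |f n| * (1/2) := mul_le_mul_of_nonneg_left hn (abs_nonneg _)
    _ = 1/2 * |f n| := by ring

lemma ratio_tendsto_zero (a z : ℝ) {b : ℝ} (hb : 0 < b) :
    Filter.Tendsto (fun n : ℕ => |a + n| * |z| / ((b + n) * (n + 1)))
      Filter.atTop (nhds 0) := by
  have hbn : Filter.Tendsto (fun n : ℕ => b + (n:ℝ)) Filter.atTop Filter.atTop :=
    Filter.tendsto_atTop_add_const_left _ _ tendsto_natCast_atTop_atTop
  have key : Filter.Tendsto (fun n : ℕ => (|a| + 1) * |z| / (b + n)) Filter.atTop (nhds 0) :=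
    Filter.Tendsto.div_atTop tendsto_const_nhds hbn
  refine squeeze_zero (fun n => by positivity) (fun n => ?_) key
  have h1 : |a + (n:ℝ)| ≤ (|a| + 1) * (n + 1) := by
    have h2 := abs_add_le a (n:ℝ)
    have h3 : |(n:ℝ)| = n := abs_of_nonneg (Nat.cast_nonneg n)
    have h4 : (0:ℝ) ≤ n := Nat.cast_nonneg n
    nlinarith [abs_nonneg a]
  rw [div_le_div_iff₀ (by positivity) (by positivity)]
  calc |a + (n:ℝ)| * |z| * (b + n)
      ≤ ((|a| + 1) * (n+1)) * |z| * (b + n) :=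
        mul_le_mul_of_nonneg_right (mul_le_mul_of_nonneg_right h1 (abs_nonneg z)) (by positivity)
    _ = (|a| + 1) * |z| * ((b + n) * (n + 1)) := by ring

lemma summable_abs_hyp {b : ℝ} (hb : 0 < b) (a z : ℝ) :
    Summable (fun n : ℕ => |poch a n / poch b n * z ^ n / n.factorial|) := by
  apply summable_abs_of_ratio (r := fun n => |a + n| * |z| / ((b + n) * (n + 1)))
  · intro n
    have hbn := (poch_pos hb n).ne'
    have hbn2 : (0:ℝ) < b + n := by positivity
    have hfac : (0:ℝ) < n.factorial := by positivity
    have hn1 : (0:ℝ) < (n:ℝ) + 1 := by positivity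
    have key : poch a (n+1) / poch b (n+1) * z ^ (n+1) / (n+1).factorial
        = (poch a n / poch b n * z ^ n / n.factorial) * ((a+n) * z / ((b+n) * (n+1))) := by
      rw [poch_succ a n, poch_succ b n, Nat.factorial_succ, pow_succ]
      push_cast
      field_simp
    rw [key, abs_mul]
    congr 1
    rw [abs_div, abs_mul, abs_mul, abs_of_pos hbn2, abs_of_pos hn1]
  · exact ratio_tendsto_zero a z hb

lemma tendsto_abs_ratio (c : ℝ) :
    Filter.Tendsto (fun n : ℕ => |c + n| / (n+1)) Filter.atTop (nhds 1) := by
  have h0 : Filter.Tendsto (fun n : ℕ => (c-1) / ((n:ℝ)+1) + 1) Filter.atTop (nhds 1) := by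
    have h1 : Filter.Tendsto (fun n : ℕ => ((n:ℝ)+1)) Filter.atTop Filter.atTop :=
      Filter.tendsto_atTop_add_const_right _ _ tendsto_natCast_atTop_atTop
    have := (Filter.Tendsto.div_atTop (tendsto_const_nhds (x := c - 1)) h1).add_const 1
    simpa using this
  apply h0.congr'
  obtain ⟨N, hN⟩ := exists_nat_ge (-c)
  rw [Filter.eventuallyEq_iff_exists_mem]
  refine ⟨{n | N ≤ n}, Filter.mem_atTop N, fun n hn => ?_⟩
  have hn' : (N:ℝ) ≤ n := Nat.cast_le.2 hn
  have hc : (0:ℝ) ≤ c + n := by linarith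
  show (c - 1) / ((n:ℝ) + 1) + 1 = |c + (n:ℝ)| / ((n:ℝ)+1)
  rw [abs_of_nonneg hc]
  field_simp
  ring

lemma summable_abs_poch_mul (c : ℝ) {x : ℝ} (hx : |x| < 1) :
    Summable (fun n : ℕ => |poch c n * x ^ n / n.factorial|) := by
  apply summable_of_ratio_norm_eventually_le (r := (1 + |x|)/2) (by linarith)
  have hr : Filter.Tendsto (fun n : ℕ => |c + n| / (n+1) * |x|) Filter.atTop (nhds |x|) := by
    simpa using (tendsto_abs_ratio c).mul_const |x|
  have hev := hr.eventually_le_const (show |x| < (1 + |x|)/2 by linarith)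
  filter_upwards [hev] with n hn
  have hfac : (0:ℝ) < n.factorial := by positivity
  have hn1 : (0:ℝ) < (n:ℝ) + 1 := by positivity
  have key : poch c (n+1) * x^(n+1) / (n+1).factorial
      = (poch c n * x^n / n.factorial) * ((c+n) * x / ((n:ℝ)+1)) := by
    rw [poch_succ, Nat.factorial_succ, pow_succ]
    push_cast
    field_simp
  rw [Real.norm_eq_abs, Real.norm_eq_abs, abs_abs, abs_abs, key, abs_mul]
  have h5 : |(c+n) * x / ((n:ℝ)+1)| = |c + n| / (n+1) * |x| := by
    rw [abs_div, abs_mul, abs_of_pos hn1]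
    ring
  rw [h5]
  calc |poch c n * x ^ n / n.factorial| * (|c + n| / (n+1) * |x|)
      ≤ |poch c n * x ^ n / n.factorial| * ((1 + |x|)/2) :=
        mul_le_mul_of_nonneg_left hn (abs_nonneg _)
    _ = (1 + |x|)/2 * |poch c n * x ^ n / n.factorial| := mul_comm _ _

lemma vandermonde : ∀ (n : ℕ) (b c : ℝ),
    ∑ k ∈ Finset.range (n+1), (-1:ℝ)^k * (n.choose k : ℝ) * poch c k * poch (b + k) (n - k)
      = poch (b - c) n := by
  intro n
  induction n with
  | zero => intro b c; simp [poch]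
  | succ n ih =>
    intro b c
    have key : ∀ j ∈ Finset.range (n+1),
        (-1:ℝ)^(j+1) * (((n+1).choose (j+1) : ℕ) : ℝ) * poch c (j+1) * poch (b + ((j+1 : ℕ) : ℝ)) (n+1-(j+1))
        = ((-1:ℝ)^(j+1) * ((n.choose (j+1) : ℕ) : ℝ) * poch c (j+1) * poch (b + ((j+1 : ℕ) : ℝ)) (n-j))
          + (-((-1:ℝ)^j * ((n.choose j : ℕ) : ℝ) * (poch c j * (c+j)) * poch (b+1+j) (n-j))) := by
      intro j hj
      have hch : (((n+1).choose (j+1) : ℕ) : ℝ) = (n.choose j : ℝ) + (n.choose (j+1) : ℝ) := by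
        rw [Nat.choose_succ_succ]; push_cast; ring
      have hsub : n + 1 - (j+1) = n - j := by omega
      rw [hch, hsub, poch_succ c j]
      have hb : poch (b + ((j+1:ℕ):ℝ)) (n-j) = poch (b+1+j) (n-j) := by
        congr 1; push_cast; ring
      rw [hb, pow_succ]
      ring
    have hA : ∑ k ∈ Finset.range (n+1), (-1:ℝ)^k * ((n.choose k : ℕ) : ℝ) * poch c k * poch (b+k) (n+1-k)
        = (∑ j ∈ Finset.range (n+1), (-1:ℝ)^(j+1) * ((n.choose (j+1) : ℕ) : ℝ) * poch c (j+1) * poch (b+((j+1:ℕ):ℝ)) (n-j))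
          + poch b (n+1) := by
      have hAext : ∑ k ∈ Finset.range (n+2), (-1:ℝ)^k * ((n.choose k : ℕ) : ℝ) * poch c k * poch (b+k) (n+1-k)
          = ∑ k ∈ Finset.range (n+1), (-1:ℝ)^k * ((n.choose k : ℕ) : ℝ) * poch c k * poch (b+k) (n+1-k) := by
        rw [Finset.sum_range_succ]
        simp [Nat.choose_succ_self]
      rw [← hAext, Finset.sum_range_succ']
      congr 1
      · apply Finset.sum_congr rfl
        intro j hj
        have hsub : n + 1 - (j+1) = n - j := by omega
        rw [hsub]
      · simp [poch]
    rw [Finset.sum_range_succ']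
    have h0 : (-1:ℝ)^0 * (((n+1).choose 0 : ℕ) : ℝ) * poch c 0 * poch (b + ((0:ℕ):ℝ)) (n+1-0) = poch b (n+1) := by
      simp [poch]
    rw [h0, Finset.sum_congr rfl key, Finset.sum_add_distrib]
    have hgoal : poch (b-c) (n+1) = (b - c) * poch (b+1-c) n := by
      rw [poch_succ']; congr 2; ring
    rw [hgoal, ← ih (b+1) c, Finset.mul_sum]
    have expand : ∀ k ∈ Finset.range (n+1),
        (b - c) * ((-1:ℝ)^k * ((n.choose k : ℕ) : ℝ) * poch c k * poch (b+1+k) (n-k))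
        = ((-1:ℝ)^k * ((n.choose k : ℕ) : ℝ) * poch c k * poch (b+k) (n+1-k))
          + (-((-1:ℝ)^k * ((n.choose k : ℕ) : ℝ) * (poch c k * (c+k)) * poch (b+1+k) (n-k))) := by
      intro k hk
      have hk' : k ≤ n := by simpa [Nat.lt_succ_iff] using Finset.mem_range.1 hk
      have hsub : n + 1 - k = (n - k) + 1 := by omega
      have hpoch : poch (b+k) (n+1-k) = (b+k) * poch (b+1+k) (n-k) := by
        rw [hsub, poch_succ']
        congr 2; ring
      rw [hpoch]
      ring
    rw [Finset.sum_congr rfl expand, Finset.sum_add_distrib, hA]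
    ring

lemma real_exp_eq_tsum (z : ℝ) : Real.exp z = ∑' n : ℕ, z ^ n / n.factorial := by
  rw [Real.exp_eq_exp_ℝ, NormedSpace.exp_eq_tsum_div]

lemma summable_exp_abs (z : ℝ) : Summable (fun n : ℕ => ‖z ^ n / n.factorial‖) := by
  have := Real.summable_pow_div_factorial |z|
  apply this.congr
  intro n
  rw [Real.norm_eq_abs, abs_div, abs_pow, abs_of_pos (by positivity : (0:ℝ) < (n.factorial:ℝ))]

lemma kummer {b : ℝ} (hb : 0 < b) (a z : ℝ) :
    hyp1F1 a b z = Real.exp z * hyp1F1 (b - a) b (-z) := by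
  rw [real_exp_eq_tsum, hyp1F1, hyp1F1,
    tsum_mul_tsum_eq_tsum_sum_antidiagonal_of_summable_norm (summable_exp_abs z)
      ((summable_abs_hyp hb (b-a) (-z)).congr (fun n => (Real.norm_eq_abs _).symm))]
  apply tsum_congr
  intro n
  rw [Finset.Nat.sum_antidiagonal_eq_sum_range_succ_mk, ← Finset.sum_range_reflect]
  simp only [Nat.succ_sub_one]
  have hT : ∀ i ∈ Finset.range (n+1),
      z ^ (n - i) / (n - i).factorial *
        (poch (b-a) (n - (n - i)) / poch b (n - (n - i)) * (-z) ^ (n - (n - i)) / (n - (n-i)).factorial)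
      = (-1:ℝ)^i * (n.choose i : ℝ) * poch (b-a) i * poch (b+i) (n-i)
          * (z^n / (poch b n * n.factorial)) := by
    intro i hi
    have hi' : i ≤ n := by
      have := Finset.mem_range.1 hi; omega
    rw [Nat.sub_sub_self hi']
    have hz : z ^ (n - i) * z ^ i = z ^ n := by
      rw [← pow_add]; congr 1; omega
    have hpoch : poch b n = poch b i * poch (b + i) (n - i) := by
      have := poch_add b i (n - i)
      rwa [Nat.add_sub_cancel' hi'] at this
    have hfac : ((n.choose i : ℕ) : ℝ) * i.factorial * (n - i).factorial = n.factorial := by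
      rw_mod_cast [Nat.choose_mul_factorial_mul_factorial hi']
    have hb1 : poch b i ≠ 0 := (poch_pos hb i).ne'
    have hb2 : poch (b + i) (n - i) ≠ 0 := by
      have : (0:ℝ) < poch b n := poch_pos hb n
      rw [hpoch] at this
      intro h; rw [h] at this; simp at this
    have f1 : ((n - i).factorial : ℝ) ≠ 0 := by positivity
    have f2 : (i.factorial : ℝ) ≠ 0 := by positivity
    have hc : ((n.choose i : ℕ) : ℝ) ≠ 0 := Nat.cast_ne_zero.2 (Nat.choose_pos hi').ne'
    rw [neg_pow, hpoch, ← hfac, ← hz]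
    field_simp
  rw [Finset.sum_congr rfl hT, ← Finset.sum_mul]
  have hvand := vandermonde n b (b - a)
  have hba : b - (b - a) = a := by ring
  rw [hba] at hvand
  rw [hvand]
  have hb2 : poch b n ≠ 0 := (poch_pos hb n).ne'
  have f3 : (n.factorial : ℝ) ≠ 0 := by positivity
  field_simp

lemma Gamma_poch {c : ℝ} (hc : 0 < c) (n : ℕ) :
    Real.Gamma (c + n) = Real.Gamma c * poch c n := by
  induction n with
  | zero => simp [poch]
  | succ n ih =>
      have h1 : c + ((n:ℝ) + 1) = (c + n) + 1 := by ring
      push_cast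
      rw [h1, Real.Gamma_add_one (by positivity), ih, poch_succ]
      ring

lemma binomial_pos {c x : ℝ} (hc : 0 < c) (hx0 : 0 ≤ x) (hx1 : x < 1) :
    ∑' n : ℕ, poch c n * x ^ n / n.factorial = (1 - x) ^ (-c) := by
  have hxabs : |x| < 1 := by rwa [abs_of_nonneg hx0]
  have hsum : Summable (fun n : ℕ => poch c n * x ^ n / n.factorial) :=
    (summable_abs_poch_mul c hxabs).of_abs
  have hΓ : (0:ℝ) < Real.Gamma c := Real.Gamma_pos_of_pos hc
  apply mul_left_cancel₀ hΓ.ne'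
  rw [← tsum_mul_left]
  have h1 : ∀ n : ℕ, Real.Gamma c * (poch c n * x ^ n / n.factorial)
      = x ^ n / n.factorial * Real.Gamma (c + n) := by
    intro n; rw [Gamma_poch hc n]; ring
  rw [tsum_congr h1]
  set f : ℕ → ℝ → ℝ := fun n u => x ^ n / n.factorial * (Real.exp (-u) * u ^ (c + n - 1))
  have hint : ∀ n : ℕ, IntegrableOn (fun u => Real.exp (-u) * u ^ (c + n - 1)) (Ioi (0:ℝ)) :=
    fun n => Real.GammaIntegral_convergent (by positivity)
  have hfi : ∀ n : ℕ, Integrable (f n) (volume.restrict (Ioi (0:ℝ))) :=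
    fun n => (hint n).const_mul _
  have hval : ∀ n : ℕ, ∫ u in Ioi (0:ℝ), f n u = x ^ n / n.factorial * Real.Gamma (c + n) := by
    intro n
    rw [integral_const_mul, ← Real.Gamma_eq_integral (by positivity : (0:ℝ) < c + n)]
  have hnorm : ∀ n : ℕ, (∫ u in Ioi (0:ℝ), ‖f n u‖) = x ^ n / n.factorial * Real.Gamma (c + n) := by
    intro n
    rw [← hval n]
    apply setIntegral_congr_fun measurableSet_Ioi
    intro u hu
    have hu' : (0:ℝ) < u := hu
    show ‖f n u‖ = f n u
    rw [Real.norm_eq_abs, abs_of_nonneg]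
    simp only [f]
    positivity
  have hsum2 : Summable fun n : ℕ => ∫ u in Ioi (0:ℝ), ‖f n u‖ := by
    rw [funext hnorm]
    apply Summable.congr (hsum.mul_left (Real.Gamma c))
    intro n
    rw [← h1 n]
  have hswap := MeasureTheory.integral_tsum_of_summable_integral_norm hfi hsum2
  rw [tsum_congr (fun n => (hval n).symm), hswap]
  have hptw : ∀ u ∈ Ioi (0:ℝ), (∑' n : ℕ, f n u) = u ^ (c - 1) * Real.exp (-((1-x) * u)) := by
    intro u hu
    have hu' : (0:ℝ) < u := hu
    have h2 : ∀ n : ℕ, f n u = Real.exp (-u) * u ^ (c-1) * ((x*u) ^ n / n.factorial) := by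
      intro n
      have h3 : u ^ (c + n - 1) = u ^ (c - 1) * u ^ (n:ℕ) := by
        rw [← Real.rpow_natCast u n, ← Real.rpow_add hu']
        congr 1; ring
      simp only [f, h3, mul_pow]
      ring
    rw [tsum_congr h2, tsum_mul_left, ← real_exp_eq_tsum]
    rw [show Real.exp (-u) * u ^ (c-1) * Real.exp (x*u)
        = u ^ (c-1) * (Real.exp (-u) * Real.exp (x*u)) by ring, ← Real.exp_add,
      show -u + x * u = -((1-x) * u) by ring]
  rw [setIntegral_congr_fun measurableSet_Ioi hptw]
  rw [Real.integral_rpow_mul_exp_neg_mul_Ioi hc (by linarith : (0:ℝ) < 1 - x)]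
  rw [one_div, Real.inv_rpow (by linarith), ← Real.rpow_neg (by linarith)]
  ring

lemma binomial_rec (c : ℝ) {x : ℝ} (hx : |x| < 1) :
    ∑' n : ℕ, poch c n * x ^ n / n.factorial
      = (1 - x) * ∑' n : ℕ, poch (c+1) n * x ^ n / n.factorial := by
  have hs1 : Summable (fun n : ℕ => poch (c+1) n * x ^ n / n.factorial) :=
    (summable_abs_poch_mul _ hx).of_abs
  have hsc : Summable (fun n : ℕ => poch c n * x ^ n / n.factorial) :=
    (summable_abs_poch_mul _ hx).of_abs
  have hs1' : Summable (fun n : ℕ => poch (c+1) (n+1) * x ^ (n+1) / (n+1).factorial) :=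
    (summable_nat_add_iff 1).2 hs1
  rw [one_sub_mul, ← tsum_mul_left, Summable.tsum_eq_zero_add hs1, Summable.tsum_eq_zero_add hsc]
  have h0 : poch c 0 * x ^ 0 / (Nat.factorial 0) = 1 := by simp [poch]
  have h0' : poch (c+1) 0 * x ^ 0 / (Nat.factorial 0) = 1 := by simp [poch]
  rw [h0, h0']
  rw [add_sub_assoc, ← Summable.tsum_sub hs1' (hs1.mul_left x)]
  congr 1
  apply tsum_congr
  intro n
  have hfac : ((n+1).factorial : ℝ) = (n+1) * n.factorial := by
    rw [Nat.factorial_succ]; push_cast; ring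
  have hf1 : ((n:ℝ)+1) ≠ 0 := by positivity
  have hf2 : (n.factorial : ℝ) ≠ 0 := by positivity
  rw [poch_succ' c n, poch_succ (c+1) n, hfac, pow_succ]
  field_simp
  ring

lemma binomial (c : ℝ) {x : ℝ} (hx0 : 0 ≤ x) (hx1 : x < 1) :
    ∑' n : ℕ, poch c n * x ^ n / n.factorial = (1 - x) ^ (-c) := by
  have hxabs : |x| < 1 := by rwa [abs_of_nonneg hx0]
  obtain ⟨k, hk⟩ := exists_nat_gt (-c)
  induction k generalizing c with
  | zero =>
      have : 0 < c := by simpa using hk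
      exact binomial_pos this hx0 hx1
  | succ k ih =>
      have hk' : -(c+1) < k := by push_cast at hk ⊢; linarith
      rw [binomial_rec c hxabs, ih (c+1) hk']
      rw [show -c = 1 + (-(c+1)) by ring, Real.rpow_add (by linarith) , Real.rpow_one]

lemma integrableOn_rpow_exp {a s : ℝ} (ha : -1 < a) (hs : 0 < s) :
    IntegrableOn (fun y : ℝ => y ^ a * Real.exp (-(s * y))) (Ioi (0:ℝ)) := by
  have := integrableOn_rpow_mul_exp_neg_mul_rpow ha zero_lt_one hs
  simpa using this

lemma integral_rpow_exp {a s : ℝ} (ha : -1 < a) (hs : 0 < s) :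
    ∫ y in Ioi (0:ℝ), y ^ a * Real.exp (-(s * y)) = (1/s) ^ (a+1) * Real.Gamma (a+1) := by
  have h := Real.integral_rpow_mul_exp_neg_mul_Ioi (by linarith : (0:ℝ) < a + 1) hs
  simpa using h

lemma inner_integral {μ β s : ℝ} (hμ : -1 < μ) (hβ : 0 < β) (hs : β < s) (c : ℝ) :
    ∫ y in Ioi (0:ℝ), y ^ μ * Real.exp (-(s * y)) * hyp1F1 c (μ+1) (β * y)
      = Real.Gamma (μ+1) * s ^ (-(μ+1)) * (1 - β/s) ^ (-c) := by
  have hs0 : (0:ℝ) < s := hβ.trans hs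
  have hx0 : (0:ℝ) ≤ β / s := by positivity
  have hx1 : β / s < 1 := (div_lt_one hs0).2 hs
  have hμ1 : (0:ℝ) < μ + 1 := by linarith
  set f : ℕ → ℝ → ℝ := fun n y =>
    (poch c n / poch (μ+1) n * β ^ n / n.factorial) * (y ^ (μ + n) * Real.exp (-(s * y)))
    with hf
  have hfi : ∀ n : ℕ, Integrable (f n) (volume.restrict (Ioi (0:ℝ))) := by
    intro n
    exact ((integrableOn_rpow_exp (by push_cast; linarith : (-1:ℝ) < μ + n) hs0).const_mul _)
  have hval : ∀ n : ℕ, ∫ y in Ioi (0:ℝ), f n y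
      = (poch c n / poch (μ+1) n * β ^ n / n.factorial) * ((1/s) ^ (μ+n+1) * Real.Gamma (μ+n+1)) := by
    intro n
    rw [hf]
    simp only []
    rw [integral_const_mul, integral_rpow_exp (by push_cast; linarith : (-1:ℝ) < μ + n) hs0]
  have hcoefabs : ∀ n : ℕ, |poch c n / poch (μ+1) n * β ^ n / n.factorial|
      = |poch c n| * β ^ n / (poch (μ+1) n * n.factorial) := by
    intro n
    rw [abs_div, abs_mul, abs_div, abs_pow, abs_of_pos (poch_pos hμ1 n), abs_of_pos hβ,
      abs_of_pos (by positivity : (0:ℝ) < (n.factorial:ℝ))]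
    ring
  have hnorm : ∀ n : ℕ, (∫ y in Ioi (0:ℝ), ‖f n y‖)
      = (Real.Gamma (μ+1) * (1/s) ^ (μ+1)) * |poch c n * (β/s) ^ n / n.factorial| := by
    intro n
    have habs2 : |poch c n * (β/s) ^ n / n.factorial| = |poch c n| * (β/s) ^ n / n.factorial := by
      rw [abs_div, abs_mul, abs_pow, abs_of_nonneg hx0,
        abs_of_pos (by positivity : (0:ℝ) < (n.factorial:ℝ))]
    calc (∫ y in Ioi (0:ℝ), ‖f n y‖)
        = ∫ y in Ioi (0:ℝ),
            |poch c n / poch (μ+1) n * β ^ n / n.factorial| * (y ^ (μ + n) * Real.exp (-(s * y))) := by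
          apply setIntegral_congr_fun measurableSet_Ioi
          intro y hy
          have hy' : (0:ℝ) < y := hy
          show ‖f n y‖ = _
          rw [hf]
          simp only []
          rw [Real.norm_eq_abs, abs_mul,
            abs_of_nonneg (by positivity : (0:ℝ) ≤ y ^ (μ + (n:ℝ)) * Real.exp (-(s*y)))]
      _ = |poch c n / poch (μ+1) n * β ^ n / n.factorial|
            * ((1/s) ^ (μ+n+1) * Real.Gamma (μ+n+1)) := by
          rw [integral_const_mul, integral_rpow_exp (by push_cast; linarith : (-1:ℝ) < μ + n) hs0]
      _ = (Real.Gamma (μ+1) * (1/s) ^ (μ+1)) * |poch c n * (β/s) ^ n / n.factorial| := by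
          rw [hcoefabs, habs2]
          rw [show μ + (n:ℝ) + 1 = (μ+1) + (n:ℕ) by push_cast; ring, Real.rpow_add (by positivity),
            Real.rpow_natCast, Gamma_poch hμ1 n]
          have h4 : ((1:ℝ)/s) ^ (n:ℕ) * β ^ (n:ℕ) = (β/s) ^ (n:ℕ) := by
            rw [div_pow, div_pow, one_pow]
            field_simp
          have h5 : (0:ℝ) < poch (μ+1) n := poch_pos hμ1 n
          have h6 : ((n.factorial : ℕ) : ℝ) ≠ 0 := by positivity
          field_simp
          nlinarith [h4, abs_nonneg (poch c n)]
  have hsum2 : Summable fun n : ℕ => ∫ y in Ioi (0:ℝ), ‖f n y‖ := by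
    rw [funext hnorm]
    exact ((summable_abs_poch_mul c (by rwa [abs_of_nonneg hx0] : |β/s| < 1)).mul_left _)
  have hswap := MeasureTheory.integral_tsum_of_summable_integral_norm hfi hsum2
  have hptw : ∀ y ∈ Ioi (0:ℝ), (∑' n : ℕ, f n y)
      = y ^ μ * Real.exp (-(s * y)) * hyp1F1 c (μ+1) (β * y) := by
    intro y hy
    have hy' : (0:ℝ) < y := hy
    have h2 : ∀ n : ℕ, f n y
        = (poch c n / poch (μ+1) n * (β*y) ^ n / n.factorial) * (y ^ μ * Real.exp (-(s * y))) := by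
      intro n
      rw [hf]
      simp only []
      rw [show y ^ (μ + (n:ℝ)) = y ^ μ * y ^ (n:ℕ) by
        rw [← Real.rpow_natCast y n, ← Real.rpow_add hy'], mul_pow]
      ring
    rw [tsum_congr h2, tsum_mul_right, hyp1F1]
    ring
  rw [← setIntegral_congr_fun measurableSet_Ioi hptw, ← hswap, tsum_congr hval]
  have h7 : ∀ n : ℕ, (poch c n / poch (μ+1) n * β ^ n / n.factorial)
      * ((1/s) ^ (μ+n+1) * Real.Gamma (μ+n+1))
      = (Real.Gamma (μ+1) * (1/s) ^ (μ+1)) * (poch c n * (β/s) ^ n / n.factorial) := by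
    intro n
    rw [show μ + (n:ℝ) + 1 = (μ+1) + (n:ℕ) by push_cast; ring, Real.rpow_add (by positivity),
      Real.rpow_natCast, Gamma_poch hμ1 n]
    have h4 : ((1:ℝ)/s) ^ (n:ℕ) * β ^ (n:ℕ) = (β/s) ^ (n:ℕ) := by
      rw [div_pow, div_pow, one_pow]
      field_simp
    have h5 : (0:ℝ) < poch (μ+1) n := poch_pos hμ1 n
    have h6 : ((n.factorial : ℕ) : ℝ) ≠ 0 := by positivity
    field_simp
    rw [← h4]; ring
  rw [tsum_congr h7, tsum_mul_left, binomial c hx0 hx1]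
  rw [one_div, Real.inv_rpow hs0.le, ← Real.rpow_neg hs0.le]

/-- If `F` is the Laplace transform of `G` (converging absolutely for all `x ≥ p`), with
`μ > −1`, `ν > μ − 1`, `β > 0`, `p > 0`, and the indicated joint integrability, then
`∫₀^∞ y^μ F(y+p) ₁F₁(ν+1;μ+1;−βy) dy = Γ(μ+1) ∫₀^∞ G(t) t^{ν−μ} e^{−p t}/(t+β)^{ν+1} dt`. -/
theorem integral_rpow_laplace_hyp1F1 (μ ν β p : ℝ) (hμ : -1 < μ) (hν : μ - 1 < ν)
    (hβ : 0 < β) (hp : 0 < p) (G F : ℝ → ℝ) (hG : Measurable G)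
    (hFconv : ∀ x, p ≤ x → IntegrableOn (fun t => Real.exp (-(x * t)) * G t) (Ioi 0))
    (hF : ∀ x, p ≤ x → F x = ∫ t in Ioi (0:ℝ), Real.exp (-(x * t)) * G t)
    (hprod : Integrable
      (fun q : ℝ × ℝ =>
        q.1 ^ μ * hyp1F1 (ν + 1) (μ + 1) (-(β * q.1)) *
          (Real.exp (-((q.1 + p) * q.2)) * G q.2))
      ((volume.restrict (Ioi (0:ℝ))).prod (volume.restrict (Ioi (0:ℝ))))) :
    ∫ y in Ioi (0:ℝ), y ^ μ * F (y + p) * hyp1F1 (ν + 1) (μ + 1) (-(β * y))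
      = Real.Gamma (μ + 1) *
          ∫ t in Ioi (0:ℝ), G t * t ^ (ν - μ) * Real.exp (-(p * t)) / (t + β) ^ (ν + 1) := by
  have hμ1 : (0:ℝ) < μ + 1 := by linarith
  set g : ℝ → ℝ → ℝ := fun y t =>
    y ^ μ * hyp1F1 (ν + 1) (μ + 1) (-(β * y)) * (Real.exp (-((y + p) * t)) * G t) with hg
  have hE : ∀ t ∈ Ioi (0:ℝ),
      (∫ y in Ioi (0:ℝ), y ^ μ * hyp1F1 (ν+1) (μ+1) (-(β*y)) * Real.exp (-((y+p)*t)))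
        = Real.exp (-(p*t)) *
            (Real.Gamma (μ+1) * (t+β) ^ (-(μ+1)) * (1 - β/(t+β)) ^ (-(μ-ν))) := by
    intro t ht
    have ht' : (0:ℝ) < t := ht
    have h1 : ∀ y ∈ Ioi (0:ℝ),
        y ^ μ * hyp1F1 (ν+1) (μ+1) (-(β*y)) * Real.exp (-((y+p)*t))
          = Real.exp (-(p*t)) * (y ^ μ * Real.exp (-((t+β)*y)) * hyp1F1 (μ-ν) (μ+1) (β*y)) := by
      intro y hy
      have hk := kummer hμ1 (ν+1) (-(β*y))
      rw [neg_neg, show μ+1-(ν+1) = μ-ν by ring] at hk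
      rw [hk]
      have hexp : Real.exp (-(β*y)) * Real.exp (-((y+p)*t))
          = Real.exp (-(p*t)) * Real.exp (-((t+β)*y)) := by
        rw [← Real.exp_add, ← Real.exp_add]; congr 1; ring
      calc y ^ μ * (Real.exp (-(β*y)) * hyp1F1 (μ-ν) (μ+1) (β*y)) * Real.exp (-((y+p)*t))
          = (Real.exp (-(β*y)) * Real.exp (-((y+p)*t))) * (y^μ * hyp1F1 (μ-ν) (μ+1) (β*y)) := by
            ring
        _ = Real.exp (-(p*t)) * (y ^ μ * Real.exp (-((t+β)*y)) * hyp1F1 (μ-ν) (μ+1) (β*y)) := by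
            rw [hexp]; ring
    rw [setIntegral_congr_fun measurableSet_Ioi h1, integral_const_mul,
      inner_integral hμ hβ (by linarith : β < t + β) (μ-ν)]
  calc ∫ y in Ioi (0:ℝ), y ^ μ * F (y + p) * hyp1F1 (ν + 1) (μ + 1) (-(β * y))
      = ∫ y in Ioi (0:ℝ), ∫ t in Ioi (0:ℝ), g y t := by
        apply setIntegral_congr_fun measurableSet_Ioi
        intro y hy
        have hy' : (0:ℝ) < y := hy
        calc y ^ μ * F (y + p) * hyp1F1 (ν + 1) (μ + 1) (-(β * y))
            = (y ^ μ * hyp1F1 (ν + 1) (μ + 1) (-(β * y)))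
                * ∫ t in Ioi (0:ℝ), Real.exp (-((y+p) * t)) * G t := by
              rw [hF (y+p) (by linarith)]; ring
          _ = ∫ t in Ioi (0:ℝ), g y t := (integral_const_mul _ _).symm
    _ = ∫ t in Ioi (0:ℝ), ∫ y in Ioi (0:ℝ), g y t := integral_integral_swap hprod
    _ = ∫ t in Ioi (0:ℝ),
          (Real.exp (-(p*t)) *
            (Real.Gamma (μ+1) * (t+β) ^ (-(μ+1)) * (1 - β/(t+β)) ^ (-(μ-ν)))) * G t := by
        apply setIntegral_congr_fun measurableSet_Ioi
        intro t ht
        dsimp only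
        rw [← hE t ht, ← integral_mul_const]
        apply integral_congr_ae (Filter.Eventually.of_forall (fun y => by rw [hg]; ring))
    _ = Real.Gamma (μ + 1) *
          ∫ t in Ioi (0:ℝ), G t * t ^ (ν - μ) * Real.exp (-(p * t)) / (t + β) ^ (ν + 1) := by
        rw [← integral_const_mul]
        apply setIntegral_congr_fun measurableSet_Ioi
        intro t ht
        dsimp only
        have ht' : (0:ℝ) < t := ht
        have htβ : (0:ℝ) < t + β := by linarith
        have e1 : 1 - β/(t+β) = t/(t+β) := by field_simp; ring
        have e2 : (t/(t+β)) ^ (-(μ-ν)) = t ^ (ν-μ) * (t+β) ^ (μ-ν) := by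
          rw [show -(μ-ν) = ν-μ by ring, Real.div_rpow ht'.le htβ.le, div_eq_mul_inv,
            ← Real.rpow_neg htβ.le, show -(ν-μ) = μ-ν by ring]
        have e3 : (t+β) ^ (-(μ+1)) * (t+β) ^ (μ-ν) = (t+β) ^ (-(ν+1)) := by
          rw [← Real.rpow_add htβ]; congr 1; ring
        have e4 : (t+β) ^ (-(ν+1)) = ((t+β) ^ (ν+1))⁻¹ := Real.rpow_neg htβ.le _
        rw [e1, e2]
        calc Real.exp (-(p*t)) * (Real.Gamma (μ+1) * (t+β) ^ (-(μ+1))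
                * (t ^ (ν-μ) * (t+β) ^ (μ-ν))) * G t
            = Real.Gamma (μ+1) * (G t * t ^ (ν-μ) * Real.exp (-(p*t))
                * ((t+β) ^ (-(μ+1)) * (t+β) ^ (μ-ν))) := by ring
          _ = Real.Gamma (μ + 1) * (G t * t ^ (ν - μ) * Real.exp (-(p * t)) / (t + β) ^ (ν + 1)) := by
              rw [e3, e4, div_eq_mul_inv]
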